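/- The one-dimensional polytope group is the augmentation ideal of the group ring of ℝ: the assignment ⟨a,b⟩ ↦ [b] − [a] induces a well-defined isomorphism of abelian groups from Pt(E¹) onto the augmentation ideal ker(ε : ℤ[ℝ] → ℤ), and this isomorphism is ℝ-equivariant for the translation actions (t·⟨a,b⟩ = ⟨a+t, b+t⟩ on Pt(E¹) and t·[x] = [x+t] on ℤ[ℝ]). -/

import Mathlib

noncomputable section

/-- Generators of `Pt(E¹)`: pairs `(a,b)` of reals with `a < b`, representing the
interval `[a,b]`. -/
def IntervalGen : Type := {p : ℝ × ℝ // p.1 < p.2}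

/-- The subgroup of relations: `⟨a,b⟩ − ⟨a,c⟩ − ⟨c,b⟩` for all `a < c < b`. -/
def ptRel : AddSubgroup (FreeAbelianGroup IntervalGen) :=
  AddSubgroup.closure
    {x | ∃ (a b c : ℝ) (hab : a < b) (hac : a < c) (hcb : c < b),
      x = FreeAbelianGroup.of (⟨(a, b), hab⟩ : IntervalGen)
        - FreeAbelianGroup.of (⟨(a, c), hac⟩ : IntervalGen)
        - FreeAbelianGroup.of (⟨(c, b), hcb⟩ : IntervalGen)}

/-- The polytope (Steinberg) group `Pt(E¹)` of the Euclidean line: the free abelian group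
on the generators `⟨a,b⟩` (for `a < b`) modulo the cutting relations. -/
def PtE1 : Type := FreeAbelianGroup IntervalGen ⧸ ptRel

instance : AddCommGroup PtE1 := QuotientAddGroup.Quotient.addCommGroup ptRel

/-- The class of the generator `⟨a,b⟩` in `Pt(E¹)`. -/
def PtE1.gen (a b : ℝ) (h : a < b) : PtE1 :=
  QuotientAddGroup.mk (FreeAbelianGroup.of (⟨(a, b), h⟩ : IntervalGen))

/-- Translation of a generating interval by `t`. -/
def shiftGen (t : ℝ) (p : IntervalGen) : IntervalGen :=
  ⟨(p.1.1 + t, p.1.2 + t), add_lt_add_of_lt_of_le p.2 le_rfl⟩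

lemma shift_rel_le (t : ℝ) :
    ptRel ≤ ptRel.comap (FreeAbelianGroup.map (shiftGen t)) := by
  rw [ptRel, AddSubgroup.closure_le]
  rintro x ⟨a, b, c, hab, hac, hcb, rfl⟩
  show FreeAbelianGroup.map (shiftGen t)
    (FreeAbelianGroup.of (α := IntervalGen) ⟨(a, b), hab⟩
      - FreeAbelianGroup.of (α := IntervalGen) ⟨(a, c), hac⟩
      - FreeAbelianGroup.of (α := IntervalGen) ⟨(c, b), hcb⟩) ∈ ptRel
  rw [map_sub, map_sub]
  erw [FreeAbelianGroup.map_of_apply, FreeAbelianGroup.map_of_apply,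
    FreeAbelianGroup.map_of_apply]
  exact AddSubgroup.subset_closure
    ⟨a + t, b + t, c + t, add_lt_add_of_lt_of_le hab le_rfl, add_lt_add_of_lt_of_le hac le_rfl,
      add_lt_add_of_lt_of_le hcb le_rfl, rfl⟩

/-- The translation action of `t ∈ ℝ = T(1)` on `Pt(E¹)`, sending `⟨a,b⟩` to
`⟨a+t, b+t⟩`. -/
def PtE1.shift (t : ℝ) : PtE1 →+ PtE1 :=
  QuotientAddGroup.map ptRel ptRel (FreeAbelianGroup.map (shiftGen t)) (shift_rel_le t)

/-- The augmentation homomorphism `ε : ℤ[ℝ] → ℤ` sending each basis element `[x]` to `1`. -/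
def aug : AddMonoidAlgebra ℤ ℝ →+ ℤ :=
  (Finsupp.liftAddHom fun _ : ℝ => AddMonoidHom.id ℤ).comp
    AddMonoidAlgebra.coeffAddEquiv.toAddMonoidHom

/-- **`Pt(E¹)` is the augmentation ideal of `ℤ[ℝ]`**: the assignment
`⟨a,b⟩ ↦ [b] − [a]` induces a well-defined isomorphism of abelian groups from `Pt(E¹)` onto
`ker(ε : ℤ[ℝ] → ℤ)`, and this isomorphism is `ℝ`-equivariant for the translation actions
(`t·⟨a,b⟩ = ⟨a+t,b+t⟩` on `Pt(E¹)`, and `t·[x] = [x+t]`, i.e. multiplication by the basis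
element `[t]`, on `ℤ[ℝ]`). -/


lemma aug_single (x : ℝ) (n : ℤ) : aug (AddMonoidAlgebra.single x n) = n :=
  Finsupp.liftAddHom_apply_single (fun _ : ℝ => AddMonoidHom.id ℤ) x n

def Fmap : FreeAbelianGroup IntervalGen →+ AddMonoidAlgebra ℤ ℝ :=
  FreeAbelianGroup.lift fun p : IntervalGen =>
    AddMonoidAlgebra.single p.1.2 1 - AddMonoidAlgebra.single p.1.1 1

lemma Fmap_of (p : IntervalGen) :
    Fmap (FreeAbelianGroup.of p)
      = AddMonoidAlgebra.single p.1.2 1 - AddMonoidAlgebra.single p.1.1 1 :=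
  FreeAbelianGroup.lift_apply_of _ _

lemma aug_Fmap (x : FreeAbelianGroup IntervalGen) : aug (Fmap x) = 0 := by
  have : aug.comp Fmap = 0 := by
    apply FreeAbelianGroup.lift_ext
    intro p
    simp [Fmap_of, aug_single]
  exact DFunLike.congr_fun this x

def F' : FreeAbelianGroup IntervalGen →+ aug.ker :=
  Fmap.codRestrict aug.ker fun x => aug_Fmap x

lemma ptRel_le_kerF : ptRel ≤ F'.ker := by
  rw [ptRel, AddSubgroup.closure_le]
  rintro x ⟨a, b, c, hab, hac, hcb, rfl⟩
  show F' (FreeAbelianGroup.of (α := IntervalGen) ⟨(a, b), hab⟩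
      - FreeAbelianGroup.of (α := IntervalGen) ⟨(a, c), hac⟩
      - FreeAbelianGroup.of (α := IntervalGen) ⟨(c, b), hcb⟩) = 0
  apply Subtype.ext
  show Fmap _ = 0
  rw [map_sub, map_sub]
  erw [Fmap_of, Fmap_of, Fmap_of]
  abel

def efwd : PtE1 →+ aug.ker :=
  QuotientAddGroup.lift ptRel F' ptRel_le_kerF

lemma efwd_gen (a b : ℝ) (h : a < b) :
    (efwd (PtE1.gen a b h) : AddMonoidAlgebra ℤ ℝ)
      = AddMonoidAlgebra.single b 1 - AddMonoidAlgebra.single a 1 := by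
  show (F' (FreeAbelianGroup.of ⟨(a, b), h⟩) : AddMonoidAlgebra ℤ ℝ) = _
  exact Fmap_of _

def gfun (a b : ℝ) : PtE1 :=
  if h : a < b then PtE1.gen a b h else if h' : b < a then - PtE1.gen b a h' else 0

lemma gfun_self (a : ℝ) : gfun a a = 0 := by simp [gfun]

lemma gfun_lt {a b : ℝ} (h : a < b) : gfun a b = PtE1.gen a b h := by simp [gfun, h]

lemma gfun_gt {a b : ℝ} (h : b < a) : gfun a b = - PtE1.gen b a h := by
  simp [gfun, h, lt_asymm h]

lemma rel3 {a b c : ℝ} (hab : a < b) (hbc : b < c) :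
    PtE1.gen a b hab + PtE1.gen b c hbc = PtE1.gen a c (hab.trans hbc) := by
  have h : (QuotientAddGroup.mk (FreeAbelianGroup.of (⟨(a, c), hab.trans hbc⟩ : IntervalGen)
      - FreeAbelianGroup.of (⟨(a, b), hab⟩ : IntervalGen)
      - FreeAbelianGroup.of (⟨(b, c), hbc⟩ : IntervalGen)) : PtE1) = 0 :=
    (QuotientAddGroup.eq_zero_iff _).2 <| AddSubgroup.subset_closure
      ⟨a, c, b, hab.trans hbc, hab, hbc, rfl⟩
  change PtE1.gen a c (hab.trans hbc) - PtE1.gen a b hab - PtE1.gen b c hbc = 0 at h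
  rw [sub_sub, sub_eq_zero] at h
  exact h.symm

lemma gfun_cocycle (a b c : ℝ) : gfun a b + gfun b c = gfun a c := by
  rcases lt_trichotomy a b with hab | rfl | hab
  · rcases lt_trichotomy b c with hbc | rfl | hbc
    · rw [gfun_lt hab, gfun_lt hbc, gfun_lt (hab.trans hbc)]; exact rel3 hab hbc
    · rw [gfun_self, add_zero]
    · rcases lt_trichotomy a c with hac | rfl | hac
      · rw [gfun_lt hab, gfun_gt hbc, gfun_lt hac, ← rel3 hac hbc]; abel
      · rw [gfun_lt hab, gfun_gt hbc, gfun_self]; exact add_neg_cancel _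
      · rw [gfun_lt hab, gfun_gt hbc, gfun_gt hac, ← rel3 hac hab]; abel
  · rw [gfun_self, zero_add]
  · rcases lt_trichotomy b c with hbc | rfl | hbc
    · rcases lt_trichotomy a c with hac | rfl | hac
      · rw [gfun_gt hab, gfun_lt hbc, gfun_lt hac, ← rel3 hab hac]; abel
      · rw [gfun_gt hab, gfun_lt hbc, gfun_self]; exact neg_add_cancel _
      · rw [gfun_gt hab, gfun_lt hbc, gfun_gt hac, ← rel3 hbc hac]; abel
    · rw [gfun_self, add_zero]
    · rw [gfun_gt hab, gfun_gt hbc, gfun_gt (hbc.trans hab), ← rel3 hbc hab]; abel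

lemma gfun_anti (a b : ℝ) : gfun a b = - gfun b a := by
  have := gfun_cocycle a b a
  rw [gfun_self] at this
  linear_combination (norm := abel) this

def Φ : AddMonoidAlgebra ℤ ℝ →+ PtE1 :=
  (Finsupp.liftAddHom fun x : ℝ => zmultiplesHom PtE1 (gfun 0 x)).comp
    AddMonoidAlgebra.coeffAddEquiv.toAddMonoidHom

lemma Φ_single (x : ℝ) (n : ℤ) : Φ (AddMonoidAlgebra.single x n) = n • gfun 0 x :=
  Finsupp.liftAddHom_apply_single (fun x : ℝ => zmultiplesHom PtE1 (gfun 0 x)) x n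

lemma efwd_gfun (a b : ℝ) :
    (efwd (gfun a b) : AddMonoidAlgebra ℤ ℝ)
      = AddMonoidAlgebra.single b 1 - AddMonoidAlgebra.single a 1 := by
  rcases lt_trichotomy a b with h | rfl | h
  · rw [gfun_lt h, efwd_gen]
  · rw [gfun_self, map_zero, sub_self]; rfl
  · rw [gfun_gt h, map_neg]
    push_cast [efwd_gen]
    abel

def einv : aug.ker →+ PtE1 := Φ.comp aug.ker.subtype

lemma left_inv_key : ∀ x : PtE1, einv (efwd x) = x := by
  have h : (einv.comp efwd) = AddMonoidHom.id PtE1 := by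
    apply QuotientAddGroup.addMonoidHom_ext
    apply FreeAbelianGroup.lift_ext
    rintro ⟨⟨a, b⟩, h⟩
    show einv (efwd (PtE1.gen a b h)) = PtE1.gen a b h
    have hval : einv (efwd (PtE1.gen a b h))
        = Φ (AddMonoidAlgebra.single b 1 - AddMonoidAlgebra.single a 1) := by
      show Φ ((efwd (PtE1.gen a b h) : AddMonoidAlgebra ℤ ℝ)) = _
      rw [efwd_gen]
    rw [hval, map_sub, Φ_single, Φ_single, one_smul, one_smul,
      ← gfun_lt h, ← gfun_cocycle a 0 b, gfun_anti a 0]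
    abel
  exact fun x => DFunLike.congr_fun h x

lemma right_inv_val (y : AddMonoidAlgebra ℤ ℝ) :
    (efwd (Φ y) : AddMonoidAlgebra ℤ ℝ)
      = y - aug y • AddMonoidAlgebra.single (0 : ℝ) 1 := by
  have h : (aug.ker.subtype.comp (efwd.comp Φ))
      = AddMonoidHom.id _ - (zmultiplesHom _ (AddMonoidAlgebra.single (0 : ℝ) (1 : ℤ))).comp aug := by
    apply AddMonoidAlgebra.addMonoidHom_ext
    intro x n
    show (efwd (Φ (AddMonoidAlgebra.single x n)) : AddMonoidAlgebra ℤ ℝ)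
      = AddMonoidAlgebra.single x n - aug (AddMonoidAlgebra.single x n) • AddMonoidAlgebra.single (0 : ℝ) 1
    rw [Φ_single, map_zsmul, aug_single]
    push_cast [efwd_gfun]
    rw [smul_sub]
    have hxn : (AddMonoidAlgebra.single x n : AddMonoidAlgebra ℤ ℝ)
        = n • AddMonoidAlgebra.single x 1 := by
      rw [AddMonoidAlgebra.smul_single', mul_one]
    rw [hxn]
  exact DFunLike.congr_fun h y

lemma right_inv_key : ∀ y : aug.ker, efwd (einv y) = y := by
  rintro ⟨y, hy⟩
  apply Subtype.ext
  show (efwd (Φ y) : AddMonoidAlgebra ℤ ℝ) = y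
  rw [right_inv_val, AddMonoidHom.mem_ker.mp hy]
  simp


theorem ptE1_addEquiv_augmentationIdeal :
    ∃ e : PtE1 ≃+ aug.ker,
      (∀ (a b : ℝ) (h : a < b),
        (e (PtE1.gen a b h) : AddMonoidAlgebra ℤ ℝ)
          = AddMonoidAlgebra.single b 1 - AddMonoidAlgebra.single a 1) ∧
      (∀ (t : ℝ) (x : PtE1),
        (e (PtE1.shift t x) : AddMonoidAlgebra ℤ ℝ)
          = AddMonoidAlgebra.single t 1 * (e x : AddMonoidAlgebra ℤ ℝ)) := by
  refine ⟨{ toFun := efwd, invFun := einv, left_inv := left_inv_key,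
            right_inv := right_inv_key, map_add' := efwd.map_add }, ?_, ?_⟩
  · intro a b h
    exact efwd_gen a b h
  · intro t x
    have h : (aug.ker.subtype.comp (efwd.comp (PtE1.shift t)))
        = (AddMonoidHom.mulLeft (AddMonoidAlgebra.single t (1 : ℤ))).comp
            (aug.ker.subtype.comp efwd) := by
      apply QuotientAddGroup.addMonoidHom_ext
      apply FreeAbelianGroup.lift_ext
      rintro ⟨⟨a, b⟩, hab⟩
      show (efwd (PtE1.shift t (PtE1.gen a b hab)) : AddMonoidAlgebra ℤ ℝ)
        = AddMonoidAlgebra.single t 1 * (efwd (PtE1.gen a b hab) : AddMonoidAlgebra ℤ ℝ)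
      have hshift : PtE1.shift t (PtE1.gen a b hab)
          = PtE1.gen (a + t) (b + t) (add_lt_add_of_lt_of_le hab le_rfl) := by
        show QuotientAddGroup.mk (FreeAbelianGroup.map (shiftGen t) (FreeAbelianGroup.of _)) = _
        erw [FreeAbelianGroup.map_of_apply]
        rfl
      rw [hshift, efwd_gen, efwd_gen, mul_sub,
        AddMonoidAlgebra.single_mul_single, AddMonoidAlgebra.single_mul_single]
      rw [add_comm t a, add_comm t b, one_mul]
    exact DFunLike.congr_fun h x
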